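/- (Bernoulli–Taylor ψ-series at 0.) Let f ∈ F[X] be a polynomial of degree at most n. Then f = ∑_{k=0}^{n} ((∂_ψ^k f)(0) / k!) · x^{k*_ψ} = ∑_{k=0}^{n} ((∂_ψ^k f)(0) / k_ψ!) · X^k, where (∂_ψ^k f)(0) denotes the evaluation at 0 of the k-th iterate of ∂_ψ applied to f; i.e. the ψ-Taylor expansion of f at 0 terminates with zero remainder once n reaches the degree of f. -/

import Mathlib

open Polynomial

private lemma dpsi_coeff {F : Type*} [Field F]
    (ψ : ℕ → F) (dψ : Module.End F (Polynomial F))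
    (hd1 : dψ 1 = 0)
    (hd : ∀ m, 1 ≤ m → dψ (X ^ m) = ψ m • X ^ (m - 1)) :
    ∀ (f : Polynomial F) (j : ℕ), (dψ f).coeff j = ψ (j + 1) * f.coeff (j + 1) := by
  intro f j
  induction f using Polynomial.induction_on' with
  | add p q hp hq => simp [map_add, hp, hq, mul_add]
  | monomial m a =>
    rcases Nat.eq_zero_or_pos m with rfl | hm
    · have h0 : (Polynomial.monomial 0 a : Polynomial F) = a • 1 := by
        simp [Polynomial.monomial_zero_left, Polynomial.smul_eq_C_mul]
      rw [h0, map_smul, hd1, smul_zero]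
      simp [Polynomial.coeff_monomial, Polynomial.coeff_one]
    · have : (Polynomial.monomial m a : Polynomial F) = a • X ^ m := by
        rw [Polynomial.smul_X_eq_monomial]
      rw [this, map_smul, hd m hm]
      simp only [Polynomial.coeff_smul, Polynomial.coeff_X_pow, smul_eq_mul]
      by_cases h : m = j + 1
      · subst h; simp [mul_comm]
      · have h' : m - 1 ≠ j := by omega
        simp [Ne.symm h, Ne.symm h']

private lemma dpsi_iter_eval {F : Type*} [Field F]
    (ψ : ℕ → F) (dψ : Module.End F (Polynomial F))
    (hd1 : dψ 1 = 0)
    (hd : ∀ m, 1 ≤ m → dψ (X ^ m) = ψ m • X ^ (m - 1)) :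
    ∀ (k : ℕ) (f : Polynomial F),
      ((dψ ^ k) f).eval 0 = (∏ i ∈ Finset.range k, ψ (i + 1)) * f.coeff k := by
  intro k
  induction k with
  | zero => intro f; simp [Polynomial.eval_zero, Polynomial.coeff_zero, ← Polynomial.coeff_zero_eq_eval_zero]
  | succ k ih =>
    intro f
    have h1 : (dψ ^ (k + 1)) f = (dψ ^ k) (dψ f) := by
      rw [pow_succ]; rfl
    rw [h1, ih (dψ f), dpsi_coeff ψ dψ hd1 hd f k, Finset.prod_range_succ]
    ring

/-- Bernoulli–Taylor ψ-series at 0: for a polynomial `f` of degree at most `n`,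
`f = ∑_{k=0}^{n} ((∂_ψ^k f)(0)/k!) · x^{k*_ψ} = ∑_{k=0}^{n} ((∂_ψ^k f)(0)/k_ψ!) · X^k`,
where `x^{k*_ψ} = (k!/k_ψ!) X^k`. -/
theorem psi_bernoulli_taylor_series {F : Type*} [Field F] [CharZero F]
    (ψ : ℕ → F) (hψ : ∀ n, 1 ≤ n → ψ n ≠ 0)
    (dψ : Module.End F (Polynomial F))
    (hd1 : dψ 1 = 0)
    (hd : ∀ m, 1 ≤ m → dψ (X ^ m) = ψ m • X ^ (m - 1))
    (n : ℕ) (f : Polynomial F) (hf : f.natDegree ≤ n) :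
    f = ∑ k ∈ Finset.range (n + 1),
          (((dψ ^ k) f).eval 0 / (k.factorial : F))
            • (((k.factorial : F) / ∏ i ∈ Finset.range k, ψ (i + 1)) • X ^ k)
      ∧ f = ∑ k ∈ Finset.range (n + 1),
          (((dψ ^ k) f).eval 0 / ∏ i ∈ Finset.range k, ψ (i + 1)) • X ^ k := by
  have hP : ∀ k : ℕ, (∏ i ∈ Finset.range k, ψ (i + 1)) ≠ 0 := fun k =>
    Finset.prod_ne_zero_iff.mpr fun i _ => hψ (i + 1) (Nat.le_add_left 1 i)
  have key : f = ∑ k ∈ Finset.range (n + 1),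
      (((dψ ^ k) f).eval 0 / ∏ i ∈ Finset.range k, ψ (i + 1)) • X ^ k := by
    have hcoef : ∀ k, ((dψ ^ k) f).eval 0 / (∏ i ∈ Finset.range k, ψ (i + 1)) = f.coeff k := by
      intro k
      rw [dpsi_iter_eval ψ dψ hd1 hd k f, mul_comm, mul_div_assoc, div_self (hP k), mul_one]
    simp_rw [hcoef]
    conv_lhs => rw [f.as_sum_range' (n + 1) (Nat.lt_succ_of_le hf)]
    apply Finset.sum_congr rfl
    intro k _
    rw [Polynomial.smul_X_eq_monomial]
  refine ⟨key.trans (Finset.sum_congr rfl fun k _ => ?_), key⟩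
  rw [smul_smul]
  congr 1
  have hk : (k.factorial : F) ≠ 0 := Nat.cast_ne_zero.mpr k.factorial_ne_zero
  field_simp
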